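/- Let $T_1$ and $T_2$ be adjacent transition intervals in the grid construction with levels $t_1, t_2$ respectively. Then exactly one of the following holds: (1) $T_1$ and $T_2$ have a common $\mathcal{K}$-ancestor $K$, and $K$ is at most two $\mathcal{K}$-levels above each of $T_1, T_2$ (i.e. if $T_i \in \mathcal{K}_{t_i}$ then $K \in \mathcal{K}_{t_i - 1} \cup \mathcal{K}_{t_i - 2}$); or (2) $T_1$ and $T_2$ have no common $\mathcal{K}$-ancestor, and both $T_1, T_2 \in \mathcal{K}_1$. -/

import Mathlib

open Set

/-- `L t = k₁ + ⋯ + k_t`, the dyadic depth of the grid `𝒦_t`. -/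
def Lsum (k : ℕ → ℕ) (t : ℕ) : ℕ := ∑ i ∈ Finset.range t, k (i + 1)

/-- The common length `2^{-L t}` of the intervals of `𝒦_t`. -/
noncomputable def klen (k : ℕ → ℕ) (t : ℕ) : ℝ := (2 : ℝ) ^ (-(Lsum k t : ℤ))

/-- The interval of `𝒦_t` with index `j`: `[j 2^{-L t}, (j+1) 2^{-L t})`. -/
noncomputable def kSet (k : ℕ → ℕ) (t : ℕ) (j : ℤ) : Set ℝ :=
  Set.Ico ((j : ℝ) * klen k t) (((j : ℝ) + 1) * klen k t)

/-- The index of the `𝒦`-parent (in `𝒦_t`) of the interval of `𝒦_{t+1}` with index `j`. -/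
def kParIdx (k : ℕ → ℕ) (t : ℕ) (j : ℤ) : ℤ := Int.fdiv j (2 ^ k (t + 1))

/-- The interval of `𝒦_{t+1}` with index `j` has its standard dyadic parent `π_𝒟 R`
sharing a boundary point with its `𝒦`-parent `Q ∈ 𝒦_t` (`∂Q ∩ ∂(π_𝒟 R) ≠ ∅`). -/
noncomputable def touches (k : ℕ → ℕ) (t : ℕ) (j : ℤ) : Prop :=
  (frontier (kSet k t (kParIdx k t j)) ∩
    frontier (Set.Ico ((Int.fdiv j 2 : ℝ) * (2 * klen k (t + 1)))
      (((Int.fdiv j 2 : ℝ) + 1) * (2 * klen k (t + 1))))).Nonempty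

/-- Membership in `𝒦̂_t`: the `𝒦`-parent lies in `𝒦̂_{t-1}` and the interval is
not a transition interval. -/
def hatK (k : ℕ → ℕ) : ℕ → ℤ → Prop
  | 0, _ => True
  | t + 1, j => hatK k t (kParIdx k t j) ∧ ¬ touches k t j

/-- The interval of `𝒦_t` with index `j` is a transition interval. -/
def isTransition (k : ℕ → ℕ) : ℕ → ℤ → Prop
  | 0, _ => False
  | t + 1, j => hatK k t (kParIdx k t j) ∧ touches k t j

/-- The `𝒦`-parent map on the pairs (level, index). -/
def kParentFn (k : ℕ → ℕ) : ℕ × ℤ → ℕ × ℤ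
  | (0, j) => (0, j)
  | (t + 1, j) => (t, kParIdx k t j)

/-- `A` is a `𝒦`-ancestor of `B`. -/
def isKAncestor (k : ℕ → ℕ) (A B : ℕ × ℤ) : Prop :=
  ∃ m : ℕ, (kParentFn k)^[m] B = A

section Helpers

-- ## integer division helpers
lemma ediv_ediv (j a b : ℤ) (ha : 0 < a) (hb : 0 < b) : j / a / b = j / (a * b) := by
  have h1 : a * (j / a) + j % a = j := Int.mul_ediv_add_emod j a
  have h2 : b * (j / a / b) + (j / a) % b = j / a := Int.mul_ediv_add_emod (j / a) b
  have hr1 : 0 ≤ j % a := Int.emod_nonneg j ha.ne'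
  have hr1' : j % a < a := Int.emod_lt_of_pos j ha
  have hr2 : 0 ≤ (j / a) % b := Int.emod_nonneg _ hb.ne'
  have hr2' : (j / a) % b < b := Int.emod_lt_of_pos _ hb
  have hj : j = (a * ((j / a) % b) + j % a) + (j / a / b) * (a * b) := by nlinarith
  have hlt : a * ((j / a) % b) + j % a < a * b := by nlinarith
  have h0 : 0 ≤ a * ((j / a) % b) + j % a := by positivity
  conv_rhs => rw [hj]
  rw [Int.add_mul_ediv_right _ _ (by positivity : a * b ≠ 0),
    Int.ediv_eq_zero_of_lt h0 hlt, zero_add]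

lemma mul_ediv (c N : ℤ) (hN : N ≠ 0) : c * N / N = c := Int.mul_ediv_cancel c hN

lemma pred_mul_ediv (c N : ℤ) (hN : 0 < N) : (c * N - 1) / N = c - 1 := by
  have : c * N - 1 = (N - 1) + (c - 1) * N := by ring
  rw [this, Int.add_mul_ediv_right _ _ hN.ne',
    Int.ediv_eq_zero_of_lt (by omega) (by omega), zero_add]

lemma succ_ediv_eq {j N : ℤ} (hN : 0 < N) (h : ¬ N ∣ j + 1) : (j + 1) / N = j / N := by
  have h1 : N * (j / N) + j % N = j := Int.mul_ediv_add_emod j N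
  have hr : 0 ≤ j % N := Int.emod_nonneg j hN.ne'
  have hr' : j % N < N := Int.emod_lt_of_pos j hN
  have hne : j % N ≠ N - 1 := by
    intro he; exact h ⟨j / N + 1, by nlinarith⟩
  have e1 : j + 1 = (j % N + 1) + (j / N) * N := by linarith
  have e2 : j = (j % N) + (j / N) * N := by linarith
  rw [e1, Int.add_mul_ediv_right _ _ hN.ne',
    Int.ediv_eq_zero_of_lt (by linarith) (by cases (lt_or_eq_of_le (by linarith : j % N ≤ N - 1)) with
      | inl h' => linarith
      | inr h' => exact absurd h' hne), zero_add]

lemma pred_ediv_eq {j N : ℤ} (hN : 0 < N) (h : ¬ N ∣ j) : (j - 1) / N = j / N := by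
  have h1 : N * (j / N) + j % N = j := Int.mul_ediv_add_emod j N
  have hr : 0 ≤ j % N := Int.emod_nonneg j hN.ne'
  have hr' : j % N < N := Int.emod_lt_of_pos j hN
  have hne : j % N ≠ 0 := by
    intro he; exact h ⟨j / N, by nlinarith⟩
  have e1 : j - 1 = (j % N - 1) + (j / N) * N := by linarith
  rw [e1, Int.add_mul_ediv_right _ _ hN.ne',
    Int.ediv_eq_zero_of_lt (by cases (lt_or_eq_of_le hr) with
      | inl h' => linarith
      | inr h' => exact absurd h'.symm hne) (by linarith), zero_add]

-- ## basic grid facts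
variable {k : ℕ → ℕ}

lemma Lsum_succ (t : ℕ) : Lsum k (t + 1) = Lsum k t + k (t + 1) :=
  Finset.sum_range_succ _ _

lemma Lsum_mono {a b : ℕ} (h : a ≤ b) : Lsum k a ≤ Lsum k b :=
  Finset.sum_le_sum_of_subset (Finset.range_subset_range.2 h)

lemma klen_pos (t : ℕ) : 0 < klen k t := zpow_pos (by norm_num) _

lemma klen_scale {a b : ℕ} (h : a ≤ b) :
    klen k a = ((2 : ℝ) ^ (Lsum k b - Lsum k a) : ℝ) * klen k b := by
  have hL : Lsum k a ≤ Lsum k b := Lsum_mono h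
  rw [klen, klen, ← zpow_natCast (2 : ℝ) (Lsum k b - Lsum k a),
    ← zpow_add₀ (by norm_num : (2:ℝ) ≠ 0)]
  congr 1
  push_cast [hL]
  ring

lemma klen_succ (t : ℕ) : klen k t = (2 : ℝ) ^ (k (t + 1)) * klen k (t + 1) := by
  have := klen_scale (k := k) (Nat.le_succ t)
  rwa [Lsum_succ, Nat.add_sub_cancel_left] at this

lemma kParIdx_eq (t : ℕ) (j : ℤ) : kParIdx k t j = j / (2 ^ k (t + 1) : ℤ) :=
  Int.fdiv_eq_ediv_of_nonneg _ (by positivity)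

lemma closure_kSet (t : ℕ) (j : ℤ) :
    closure (kSet k t j) = Icc ((j : ℝ) * klen k t) (((j : ℝ) + 1) * klen k t) := by
  have := klen_pos (k := k) t
  exact closure_Ico (by nlinarith : (j:ℝ) * klen k t < ((j:ℝ)+1) * klen k t).ne

lemma interior_kSet (t : ℕ) (j : ℤ) :
    interior (kSet k t j) = Ioo ((j : ℝ) * klen k t) (((j : ℝ) + 1) * klen k t) :=
  interior_Ico

lemma frontier_kSet (t : ℕ) (j : ℤ) :
    frontier (kSet k t j) = {((j : ℝ) * klen k t), (((j : ℝ) + 1) * klen k t)} := by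
  have := klen_pos (k := k) t
  exact frontier_Ico (by nlinarith)

-- ## touches from edge position
lemma touches_of_edge (hk : ∀ t, 1 ≤ k (t + 1)) (t : ℕ) (j : ℤ)
    (h : (2 ^ k (t + 1) : ℤ) ∣ j ∨ (2 ^ k (t + 1) : ℤ) ∣ (j + 1)) : touches k t j := by
  set N : ℤ := 2 ^ k (t + 1) with hN
  have hN0 : 0 < N := by positivity
  have h2N : (2 : ℤ) ∣ N := hN ▸ dvd_pow_self 2 (Nat.one_le_iff_ne_zero.mp (hk t))
  have hfd2 : Int.fdiv j 2 = j / 2 := Int.fdiv_eq_ediv_of_nonneg _ (by norm_num)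
  set l : ℝ := klen k (t + 1) with hl
  have hlen : klen k t = (N : ℝ) * l := by
    rw [hl, klen_succ]; push_cast [hN]; ring
  have hlp : 0 < l := klen_pos (k := k) (t + 1)
  rw [touches, frontier_kSet, kParIdx_eq, ← hN, hfd2, ← hl,
    frontier_Ico (by nlinarith : ((j / 2 : ℤ) : ℝ) * (2 * l) < (((j / 2 : ℤ) : ℝ) + 1) * (2 * l))]
  rcases h with ⟨c, hc⟩ | ⟨c, hc⟩
  · -- j = N * c ; common point: left endpoints coincide
    have hq : j / N = c := by rw [hc, mul_comm, mul_ediv _ _ hN0.ne']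
    have hj2 : 2 ∣ j := hc ▸ Dvd.dvd.mul_right h2N c
    have h2j : ((j / 2 : ℤ) : ℝ) * 2 = (j : ℝ) := by exact_mod_cast Int.ediv_mul_cancel hj2
    have hcast1 : (j : ℝ) = (N : ℝ) * (c : ℝ) := by exact_mod_cast hc
    refine ⟨((c : ℝ)) * klen k t, ?_, ?_⟩ <;>
      simp only [mem_insert_iff, mem_singleton_iff]
    · left; rw [hq]
    · left
      rw [hlen]
      linear_combination (-l) * h2j + (-l) * hcast1
  · -- j + 1 = N * c; common point: right endpoints coincide
    have hq : j / N = c - 1 := by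
      have hj' : j = c * N - 1 := by
        have hc' := hc; rw [mul_comm] at hc'; omega
      rw [hj', pred_mul_ediv _ _ hN0]
    have hj2 : ¬ (2 : ℤ) ∣ j := by
      intro h2
      have h3 : (2:ℤ) ∣ j + 1 := dvd_trans h2N ⟨c, hc⟩
      omega
    have hjodd : 2 * (j / 2) = j - 1 := by
      have := Int.mul_ediv_add_emod j 2
      omega
    have hoddc : 2 * ((j / 2 : ℤ) : ℝ) = (j : ℝ) - 1 := by exact_mod_cast hjodd
    have hcast : (j : ℝ) + 1 = (N : ℝ) * (c : ℝ) := by exact_mod_cast hc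
    refine ⟨((c : ℝ)) * klen k t, ?_, ?_⟩ <;>
      simp only [mem_insert_iff, mem_singleton_iff]
    · right; rw [hq]; push_cast; ring
    · right
      rw [hlen]
      linear_combination (-l) * hoddc + (-l) * hcast

-- ## hatK descent
lemma hatK_anc (m : ℕ) : ∀ (t : ℕ) (j : ℤ), m ≤ t → hatK k t j →
    hatK k (t - m) (j / (2 ^ (Lsum k t - Lsum k (t - m)) : ℤ)) := by
  induction m with
  | zero => intro t j _ h; simpa using h
  | succ m ih =>
    intro t j hm h
    have hmt : m ≤ t := le_of_lt (Nat.lt_of_succ_le hm)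
    have h' := ih t j hmt h
    set u : ℕ := t - (m + 1) with hu
    have htm : t - m = u + 1 := by omega
    rw [htm] at h'
    have h2 := h'.1
    rw [kParIdx_eq] at h2
    have keyL : Lsum k t - Lsum k u = (Lsum k t - Lsum k (u + 1)) + k (u + 1) := by
      have h3 : Lsum k (u + 1) = Lsum k u + k (u + 1) := Lsum_succ u
      have h4 : Lsum k (u + 1) ≤ Lsum k t := Lsum_mono (by omega)
      omega
    rw [ediv_ediv _ _ _ (by positivity) (by positivity), ← pow_add, ← keyL] at h2
    exact h2

-- ## ancestors
lemma anc_one (t : ℕ) (j : ℤ) : isKAncestor k (t, kParIdx k t j) (t + 1, j) := ⟨1, rfl⟩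

lemma anc_two (t : ℕ) (j : ℤ) :
    isKAncestor k (t, kParIdx k t (kParIdx k (t + 1) j)) (t + 2, j) := ⟨2, rfl⟩

lemma iter_one_one (j : ℤ) (m : ℕ) :
    (kParentFn k)^[m + 1] (1, j) = (0, kParIdx k 0 j) := by
  induction m with
  | zero => rfl
  | succ m ih => rw [Function.iterate_succ_apply', ih]; rfl

lemma no_common_anc {j1 j2 : ℤ} (hj : j1 ≠ j2) (hq : kParIdx k 0 j1 ≠ kParIdx k 0 j2) :
    ¬ ∃ K : ℕ × ℤ, isKAncestor k K (1, j1) ∧ isKAncestor k K (1, j2) := by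
  rintro ⟨K, ⟨m1, e1⟩, ⟨m2, e2⟩⟩
  cases m1 with
  | zero =>
    rw [Function.iterate_zero_apply] at e1
    subst e1
    cases m2 with
    | zero =>
      rw [Function.iterate_zero_apply] at e2
      exact hj (congrArg Prod.snd e2).symm
    | succ n =>
      rw [iter_one_one] at e2
      have := congrArg Prod.fst e2
      simp at this
  | succ n =>
    rw [iter_one_one] at e1
    subst e1
    cases m2 with
    | zero =>
      rw [Function.iterate_zero_apply] at e2
      have := congrArg Prod.fst e2
      simp at this
    | succ n2 =>
      rw [iter_one_one] at e2
      exact hq (congrArg Prod.snd e2).symm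

-- ## adjacency in integer form
lemma adj_key {t1 t2 : ℕ} {j1 j2 : ℤ} (hle : t1 ≤ t2)
    (hadj : (closure (kSet k t1 j1) ∩ closure (kSet k t2 j2)).Nonempty ∧
      Disjoint (interior (kSet k t1 j1)) (interior (kSet k t2 j2))) :
    (j1 + 1) * (2 ^ (Lsum k t2 - Lsum k t1) : ℤ) = j2 ∨
      j1 * (2 ^ (Lsum k t2 - Lsum k t1) : ℤ) = j2 + 1 := by
  set M : ℤ := 2 ^ (Lsum k t2 - Lsum k t1) with hM
  set l : ℝ := klen k t2 with hl
  have hlp : 0 < l := klen_pos t2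
  have hMp : (0 : ℝ) < (M : ℝ) := by positivity
  have hlen : klen k t1 = (M : ℝ) * l := by
    rw [hl, klen_scale hle]; push_cast [hM]; ring
  obtain ⟨⟨x, hx1, hx2⟩, hdisj⟩ := hadj
  rw [closure_kSet] at hx1 hx2
  rw [interior_kSet, interior_kSet] at hdisj
  set a1 : ℝ := (j1 : ℝ) * klen k t1
  set b1 : ℝ := ((j1 : ℝ) + 1) * klen k t1
  set a2 : ℝ := (j2 : ℝ) * l
  set b2 : ℝ := ((j2 : ℝ) + 1) * l
  have hab1 : a1 < b1 := by
    have := klen_pos (k := k) t1; simp only [a1, b1]; nlinarith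
  have hab2 : a2 < b2 := by simp only [a2, b2]; nlinarith
  have key : b1 ≤ a2 ∨ b2 ≤ a1 := by
    by_contra hcon
    push_neg at hcon
    obtain ⟨hc1, hc2⟩ := hcon
    have : ((max a1 a2 + min b1 b2) / 2) ∈ Ioo a1 b1 ∩ Ioo a2 b2 := by
      constructor <;> constructor <;>
        simp only [lt_div_iff₀ (by norm_num : (0:ℝ) < 2), div_lt_iff₀ (by norm_num : (0:ℝ) < 2)] <;>
        [skip; skip; skip; skip] <;>
        · rcases max_cases a1 a2 with ⟨he, _⟩ | ⟨he, _⟩ <;>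
          rcases min_cases b1 b2 with ⟨he2, _⟩ | ⟨he2, _⟩ <;> rw [he, he2] <;> linarith
    exact absurd hdisj (Set.not_disjoint_iff.mpr ⟨_, this.1, this.2⟩)
  rcases key with hkey | hkey
  · left
    have hx : b1 = a2 := le_antisymm hkey (le_trans hx2.1 (by linarith [hx1.2]))
    have : ((j1 : ℝ) + 1) * ((M:ℝ) * l) = (j2 : ℝ) * l := by rw [← hlen]; exact hx
    have h2 : ((j1 : ℝ) + 1) * (M:ℝ) = (j2 : ℝ) :=
      mul_right_cancel₀ hlp.ne' (by linarith [this])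
    exact_mod_cast h2
  · right
    have hx : b2 = a1 := le_antisymm hkey (le_trans hx1.1 (by linarith [hx2.2]))
    have : ((j2 : ℝ) + 1) * l = (j1 : ℝ) * ((M:ℝ) * l) := by rw [← hlen]; exact hx
    have h2 : (j1 : ℝ) * (M:ℝ) = ((j2 : ℝ) + 1) :=
      mul_right_cancel₀ hlp.ne' (by linarith [this])
    exact_mod_cast h2

-- ## the same-level case
lemma sameLevel (hk : ∀ t, 1 ≤ k (t + 1)) (s : ℕ) (j1 : ℤ)
    (h1 : isTransition k (s + 1) j1) (h2 : isTransition k (s + 1) (j1 + 1)) :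
    (∃ K : ℕ × ℤ, isKAncestor k K (s + 1, j1) ∧ isKAncestor k K (s + 1, j1 + 1) ∧
      (K.1 + 1 = s + 1 ∨ K.1 + 2 = s + 1)) ∨
    ((¬ ∃ K : ℕ × ℤ, isKAncestor k K (s + 1, j1) ∧ isKAncestor k K (s + 1, j1 + 1)) ∧
      s + 1 = 1) := by
  set N : ℤ := 2 ^ k (s + 1) with hN
  have hN0 : (0:ℤ) < N := by positivity
  by_cases hq : kParIdx k s j1 = kParIdx k s (j1 + 1)
  · exact Or.inl ⟨(s, kParIdx k s j1), anc_one s j1, by rw [hq]; exact anc_one s (j1 + 1),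
      Or.inl rfl⟩
  · have hdvd : N ∣ j1 + 1 := by
      by_contra hnd
      exact hq (by rw [kParIdx_eq, kParIdx_eq, succ_ediv_eq hN0 hnd])
    obtain ⟨c, hc⟩ := hdvd
    have hq1 : kParIdx k s j1 = c - 1 := by
      rw [kParIdx_eq, ← hN, (by have hc' := hc; rw [mul_comm] at hc'; omega : j1 = c * N - 1),
        pred_mul_ediv _ _ hN0]
    have hq2 : kParIdx k s (j1 + 1) = c := by
      rw [kParIdx_eq, ← hN, hc, mul_comm, mul_ediv _ _ hN0.ne']
    cases s with
    | zero =>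
      exact Or.inr ⟨no_common_anc (by omega) hq, rfl⟩
    | succ u =>
      have hhat : hatK k (u + 1) (kParIdx k (u + 1) j1) := h1.1
      have hnt : ¬ touches k u (kParIdx k (u + 1) j1) := hhat.2
      by_cases hp : kParIdx k u (kParIdx k (u + 1) j1) = kParIdx k u (kParIdx k (u + 1) (j1 + 1))
      · exact Or.inl ⟨(u, kParIdx k u (kParIdx k (u + 1) j1)), anc_two u j1,
          by rw [hp]; exact anc_two u (j1 + 1), Or.inr rfl⟩
      · exfalso
        apply hnt
        apply touches_of_edge hk
        right
        by_contra hnd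
        apply hp
        rw [hq1, hq2] at *
        rw [kParIdx_eq, kParIdx_eq]
        have hnd' : ¬ (2 ^ k (u + 1) : ℤ) ∣ c := by simpa using hnd
        exact pred_ediv_eq (by positivity) hnd'

-- ## main lemma, assuming t1 ≤ t2
lemma mainLe (hk : ∀ t, 1 ≤ k (t + 1)) (t1 t2 : ℕ) (j1 j2 : ℤ) (hle : t1 ≤ t2)
    (h1 : isTransition k t1 j1) (h2 : isTransition k t2 j2)
    (hne : (t1, j1) ≠ (t2, j2))
    (hadj : (closure (kSet k t1 j1) ∩ closure (kSet k t2 j2)).Nonempty ∧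
      Disjoint (interior (kSet k t1 j1)) (interior (kSet k t2 j2))) :
    (∃ K : ℕ × ℤ, isKAncestor k K (t1, j1) ∧ isKAncestor k K (t2, j2) ∧
      (K.1 + 1 = t1 ∨ K.1 + 2 = t1) ∧ (K.1 + 1 = t2 ∨ K.1 + 2 = t2)) ∨
    ((¬ ∃ K : ℕ × ℤ, isKAncestor k K (t1, j1) ∧ isKAncestor k K (t2, j2)) ∧
      t1 = 1 ∧ t2 = 1) := by
  have hM := adj_key (k := k) hle hadj
  rcases eq_or_lt_of_le hle with heq | hlt
  · -- same level
    subst heq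
    cases t1 with
    | zero => exact h1.elim
    | succ s =>
      rw [Nat.sub_self, pow_zero, mul_one, mul_one] at hM
      rcases hM with hA | hB
      · -- j2 = j1 + 1
        rcases sameLevel hk s j1 h1 (by rwa [hA]) with ⟨K, hK1, hK2, hKb⟩ | ⟨hno, hone⟩
        · exact Or.inl ⟨K, hK1, by rw [← hA]; exact hK2, hKb, hKb⟩
        · exact Or.inr ⟨by rwa [hA] at hno, hone, hone⟩
      · -- j1 = j2 + 1
        rcases sameLevel hk s j2 h2 (by rw [← hB]; exact h1) with ⟨K, hK1, hK2, hKb⟩ | ⟨hno, hone⟩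
        · exact Or.inl ⟨K, by rw [hB]; exact hK2, hK1, hKb, hKb⟩
        · refine Or.inr ⟨?_, hone, hone⟩
          rintro ⟨K, hKa, hKb'⟩
          rw [hB] at hKa
          exact hno ⟨K, hKb', hKa⟩
  · -- t1 < t2
    cases t1 with
    | zero => exact h1.elim
    | succ s1 =>
      set t1 : ℕ := s1 + 1 with ht1
      set N1 : ℤ := 2 ^ k (t1 + 1) with hN1
      set M' : ℤ := 2 ^ (Lsum k t2 - Lsum k (t1 + 1)) with hM'
      have hN1p : (0:ℤ) < N1 := by positivity
      have hM'p : (0:ℤ) < M' := by positivity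
      have e1 : Lsum k (t1 + 1) = Lsum k t1 + k (t1 + 1) := Lsum_succ t1
      have e2 : Lsum k (t1 + 1) ≤ Lsum k t2 := Lsum_mono hlt
      have eM : (2:ℤ) ^ (Lsum k t2 - Lsum k t1) = N1 * M' := by
        rw [hN1, hM', ← pow_add]
        congr 1
        have := Lsum_mono (k := k) (le_of_lt hlt)
        omega
      rw [eM] at hM
      rcases eq_or_lt_of_le (Nat.succ_le_of_lt hlt) with heq2 | hlt2
      · -- t2 = t1 + 1
        have heq2' : t2 = t1 + 1 := by omega
        subst heq2'
        have hMM : M' = 1 := by rw [hM', Nat.sub_self, pow_zero]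
        rw [hMM, mul_one] at hM
        have hq2hat : hatK k t1 (kParIdx k t1 j2) := h2.1
        have hnt : ¬ touches k s1 (kParIdx k t1 j2) := hq2hat.2
        set N0 : ℤ := 2 ^ k (s1 + 1) with hN0
        have hN0p : (0:ℤ) < N0 := by positivity
        rcases hM with hA | hB
        · -- (j1+1) * N1 = j2 : T1 immediately left of T2
          have hq2 : kParIdx k t1 j2 = j1 + 1 := by
            rw [kParIdx_eq, ← hN1, ← hA, mul_ediv _ _ hN1p.ne']
          have hnd : ¬ N0 ∣ (j1 + 1) := by
            intro hd
            exact hnt (touches_of_edge hk s1 _ (Or.inl (by rwa [hq2, ← hN0])))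
          refine Or.inl ⟨(s1, kParIdx k s1 j1), anc_one s1 j1, ?_, Or.inl rfl, Or.inr rfl⟩
          have := anc_two (k := k) s1 j2
          have hval : kParIdx k s1 (kParIdx k (s1 + 1) j2) = kParIdx k s1 j1 := by
            rw [show kParIdx k (s1+1) j2 = kParIdx k t1 j2 from rfl, hq2,
              kParIdx_eq, kParIdx_eq, ← hN0, succ_ediv_eq hN0p hnd]
          rwa [hval] at this
        · -- j1 * N1 = j2 + 1 : T2 immediately left of T1
          have hq2 : kParIdx k t1 j2 = j1 - 1 := by
            rw [kParIdx_eq, ← hN1, show j2 = j1 * N1 - 1 by omega, pred_mul_ediv _ _ hN1p]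
          have hnd : ¬ N0 ∣ j1 := by
            intro hd
            refine hnt (touches_of_edge hk s1 _ (Or.inr ?_))
            rw [hq2, ← hN0]
            simpa using hd
          refine Or.inl ⟨(s1, kParIdx k s1 j1), anc_one s1 j1, ?_, Or.inl rfl, Or.inr rfl⟩
          have := anc_two (k := k) s1 j2
          have hval : kParIdx k s1 (kParIdx k (s1 + 1) j2) = kParIdx k s1 j1 := by
            rw [show kParIdx k (s1+1) j2 = kParIdx k t1 j2 from rfl, hq2,
              kParIdx_eq, kParIdx_eq, ← hN0, pred_ediv_eq hN0p hnd]
          rwa [hval] at this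
      · -- t1 + 1 < t2 : impossible
        exfalso
        cases t2 with
        | zero => exact h2.elim
        | succ s2 =>
          have hhat2 : hatK k s2 (kParIdx k s2 j2) := h2.1
          have hm : s2 - (t1 + 1) ≤ s2 := Nat.sub_le _ _
          have ha := hatK_anc (s2 - (t1 + 1)) s2 (kParIdx k s2 j2) hm hhat2
          have hlev : s2 - (s2 - (t1 + 1)) = t1 + 1 := by omega
          rw [hlev] at ha
          have e3 : Lsum k (s2 + 1) = Lsum k s2 + k (s2 + 1) := Lsum_succ s2
          have e4 : Lsum k (t1 + 1) ≤ Lsum k s2 := Lsum_mono (by omega)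
          have hval : kParIdx k s2 j2 / (2 ^ (Lsum k s2 - Lsum k (t1 + 1)) : ℤ) = j2 / M' := by
            rw [kParIdx_eq, ediv_ediv _ _ _ (by positivity) (by positivity), ← pow_add, hM']
            congr 2
            omega
          rw [hval] at ha
          have hnt : ¬ touches k t1 (j2 / M') := ha.2
          apply hnt
          apply touches_of_edge hk
          rcases hM with hA | hB
          · left
            have : j2 / M' = (j1 + 1) * N1 := by
              rw [← hA, ← mul_assoc, mul_ediv _ _ hM'p.ne']
            rw [this, ← hN1]
            exact dvd_mul_left N1 (j1 + 1)
          · right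
            have hj2 : j2 = (j1 * N1) * M' - 1 := by
              have hB' : j1 * (N1 * M') = j2 + 1 := hB
              rw [← mul_assoc] at hB'
              omega
            have : j2 / M' = j1 * N1 - 1 := by rw [hj2, pred_mul_ediv _ _ hM'p]
            rw [this, ← hN1]
            simpa using dvd_mul_left N1 j1

end Helpers

/-- Two adjacent transition intervals either have a common `𝒦`-ancestor at most two
`𝒦`-levels above each of them, or have no common `𝒦`-ancestor and both lie in `𝒦₁`. -/
theorem stmt19 (k : ℕ → ℕ) (hk : ∀ t, 1 ≤ k (t + 1))
    (t1 t2 : ℕ) (j1 j2 : ℤ)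
    (h1 : isTransition k t1 j1) (h2 : isTransition k t2 j2)
    (hne : (t1, j1) ≠ (t2, j2))
    (hadj : (closure (kSet k t1 j1) ∩ closure (kSet k t2 j2)).Nonempty ∧
      Disjoint (interior (kSet k t1 j1)) (interior (kSet k t2 j2))) :
    (∃ K : ℕ × ℤ, isKAncestor k K (t1, j1) ∧ isKAncestor k K (t2, j2) ∧
      (K.1 + 1 = t1 ∨ K.1 + 2 = t1) ∧ (K.1 + 1 = t2 ∨ K.1 + 2 = t2)) ∨
    ((¬ ∃ K : ℕ × ℤ, isKAncestor k K (t1, j1) ∧ isKAncestor k K (t2, j2)) ∧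
      t1 = 1 ∧ t2 = 1) := by
  rcases le_total t1 t2 with hle | hle
  · exact mainLe hk t1 t2 j1 j2 hle h1 h2 hne hadj
  · have hadj' : (closure (kSet k t2 j2) ∩ closure (kSet k t1 j1)).Nonempty ∧
        Disjoint (interior (kSet k t2 j2)) (interior (kSet k t1 j1)) :=
      ⟨by rw [Set.inter_comm]; exact hadj.1, hadj.2.symm⟩
    rcases mainLe hk t2 t1 j2 j1 hle h2 h1 (Ne.symm hne) hadj' with
      ⟨K, hK1, hK2, hb1, hb2⟩ | ⟨hno, hb1, hb2⟩
    · exact Or.inl ⟨K, hK2, hK1, hb2, hb1⟩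
    · exact Or.inr ⟨fun ⟨K, hKa, hKb⟩ => hno ⟨K, hKb, hKa⟩, hb2, hb1⟩
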